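/- If w is a word whose set of letters (content) is B, then for every n ∈ ℕ, Subₙ(wⁿ) equals the set of all words over B of length at most n. -/

import Mathlib

def Subw {A : Type*} (n : ℕ) (u : List A) : Set (List A) :=
  {w | w.length ≤ n ∧ w.Sublist u}

/-- content of a word -/
def content {A : Type*} (w : List A) : Set A := {a | a ∈ w}

/-- `w ^ n` : n-fold concatenation -/
def listPow {A : Type*} (w : List A) (n : ℕ) : List A := (List.replicate n w).flatten

lemma mem_listPow {A : Type*} {w : List A} {n : ℕ} {a : A}
    (h : a ∈ listPow w n) : a ∈ w := by
  simp [listPow, List.mem_flatten] at h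
  exact h.2

lemma sublist_listPow_length {A : Type*} (w : List A) :
    ∀ v : List A, (∀ a ∈ v, a ∈ w) → v.Sublist (listPow w v.length) := by
  intro v
  induction v with
  | nil => intro _; simp [listPow]
  | cons a vs ih =>
    intro h
    have h1 : [a].Sublist w := by
      simpa using (h a (by simp))
    have h2 := ih (fun x hx => h x (by simp [hx]))
    have : listPow w (vs.length + 1) = w ++ listPow w vs.length := by
      simp [listPow, List.replicate_succ]
    simpa [this] using h1.append h2

lemma listPow_mono {A : Type*} (w : List A) {m n : ℕ} (h : m ≤ n) :
    (listPow w m).Sublist (listPow w n) := by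
  have : listPow w n = listPow w m ++ listPow w (n - m) := by
    simp [listPow, ← List.flatten_append, ← List.replicate_add, Nat.add_sub_cancel' h]
  rw [this]
  exact List.sublist_append_left _ _

/-- if `c(w) = B`, then `Subₙ(wⁿ)` is the set of words over `B`
of length at most `n`. -/
theorem sub_pow_eq_words_over_content {A : Type*} (w : List A) (B : Set A)
    (hw : content w = B) (n : ℕ) :
    Subw n (listPow w n) = {v : List A | v.length ≤ n ∧ ∀ a ∈ v, a ∈ B} := by
  subst hw
  ext v
  constructor
  · rintro ⟨hlen, hsub⟩
    exact ⟨hlen, fun a ha => mem_listPow (hsub.subset ha)⟩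
  · rintro ⟨hlen, hmem⟩
    exact ⟨hlen, (sublist_listPow_length w v hmem).trans (listPow_mono w hlen)⟩
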